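/- Let z₀ ∈ B^n (n ≥ 1), set R(z₀) = |1−⟨z₀,e₁⟩|²/(1−‖z₀‖²), w₀ = C(z₀) with second block w₀'' ∈ ℂ^{n−1}, and define T̃(w₁,w'') = (w₁ − 2⟨w'',w₀''⟩ + ‖w₀''‖² − i·Im((w₀)₁), w'' − w₀''). Then: (i) the Cayley transform C is a bijection from B^n onto the Siegel domain ℍⁿ; (ii) T̃ maps ℍⁿ bijectively onto ℍⁿ; (iii) (C⁻¹ ∘ T̃ ∘ C)(z₀) = ((1 − R(z₀))/(1 + R(z₀)))·e₁. -/

import Mathlib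

open Metric Filter Set Topology

/-- The point `e₁ = (1,0,…,0)` of `ℂ^(n+1)`. -/
noncomputable def e1 (n : ℕ) : EuclideanSpace ℂ (Fin (n+1)) := EuclideanSpace.single 0 1

/-- The Siegel domain `ℍ^N = {(w₁,w'') : Re w₁ > ‖w''‖²}` (here `N = n+1`). -/
def Siegel (n : ℕ) : Set (ℂ × EuclideanSpace ℂ (Fin n)) :=
  {w | ‖w.2‖^2 < w.1.re}

/-- The Cayley transform `C(z₁,z'') = ((1+z₁)/(1−z₁), z''/(1−z₁))`. -/
noncomputable def cayley {n : ℕ} (z : EuclideanSpace ℂ (Fin (n+1))) :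
    ℂ × EuclideanSpace ℂ (Fin n) :=
  ((1 + z 0) / (1 - z 0), WithLp.toLp 2 (fun j : Fin n => z j.succ / (1 - z 0)))

namespace ParAux

variable {n : ℕ}

noncomputable def cinv (w : ℂ × EuclideanSpace ℂ (Fin n)) : EuclideanSpace ℂ (Fin (n+1)) :=
  WithLp.toLp 2 (Fin.cons ((w.1 - 1) / (w.1 + 1)) (fun j => w.2 j * (2 / (w.1 + 1))))

lemma cinv_zero (w : ℂ × EuclideanSpace ℂ (Fin n)) : cinv w 0 = (w.1 - 1) / (w.1 + 1) := rfl

lemma cinv_succ (w : ℂ × EuclideanSpace ℂ (Fin n)) (j : Fin n) :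
    cinv w j.succ = w.2 j * (2 / (w.1 + 1)) := by
  simp [cinv]

lemma nsq {m : ℕ} (x : EuclideanSpace ℂ (Fin m)) : ‖x‖^2 = ∑ j, ‖x j‖^2 := by
  simpa using PiLp.norm_sq_eq_of_L2 (fun _ : Fin m => ℂ) x

lemma re_formula (a : ℂ) (h : 1 - a ≠ 0) :
    ((1 + a) / (1 - a)).re = (1 - Complex.normSq a) / Complex.normSq (1 - a) := by
  rw [Complex.div_re]
  simp [Complex.normSq_apply]
  ring

lemma snd_norm_sq (z : EuclideanSpace ℂ (Fin (n+1))) :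
    ‖(cayley z).2‖^2 = (∑ j : Fin n, ‖z j.succ‖^2) / Complex.normSq (1 - z 0) := by
  rw [nsq, Finset.sum_div]
  refine Finset.sum_congr rfl fun j _ => ?_
  rw [show (cayley z).2 j = z j.succ / (1 - z 0) from rfl, norm_div, div_pow]
  simp [Complex.sq_norm]

lemma norm_sq_decomp (z : EuclideanSpace ℂ (Fin (n+1))) :
    ‖z‖^2 = Complex.normSq (z 0) + ∑ j : Fin n, ‖z j.succ‖^2 := by
  rw [nsq, Fin.sum_univ_succ, Complex.sq_norm]

lemma cayley_mem_iff (z : EuclideanSpace ℂ (Fin (n+1))) (h : 1 - z 0 ≠ 0) :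
    cayley z ∈ Siegel n ↔ ‖z‖ < 1 := by
  have hN : 0 < Complex.normSq (1 - z 0) := by
    simpa [Complex.normSq_pos] using h
  have h2 := snd_norm_sq z
  have hz2 := norm_sq_decomp z
  have hmem : cayley z ∈ Siegel n ↔ ‖z‖^2 < 1 := by
    rw [Siegel, Set.mem_setOf_eq, h2,
      show (cayley z).1 = (1 + z 0) / (1 - z 0) from rfl, re_formula _ h,
      div_lt_div_iff_of_pos_right hN, hz2]
    constructor <;> intro <;> linarith
  rw [hmem]
  constructor <;> intro <;> nlinarith [norm_nonneg z]

lemma cinv_cayley (z : EuclideanSpace ℂ (Fin (n+1))) (h : 1 - z 0 ≠ 0) :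
    cinv (cayley z) = z := by
  have key : (cayley z).1 + 1 = 2 / (1 - z 0) := by
    rw [show (cayley z).1 = (1 + z 0)/(1 - z 0) from rfl]
    field_simp
    ring
  have key2 : (cayley z).1 - 1 = (2 * z 0) / (1 - z 0) := by
    rw [show (cayley z).1 = (1 + z 0)/(1 - z 0) from rfl]
    field_simp
    ring
  refine PiLp.ext (Fin.cases ?_ ?_)
  · rw [cinv_zero, key, key2]
    field_simp
  · intro j
    rw [cinv_succ, key, show (cayley z).2 j = z j.succ / (1 - z 0) from rfl]
    field_simp

lemma one_sub_cinv (w : ℂ × EuclideanSpace ℂ (Fin n)) (h : w.1 + 1 ≠ 0) :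
    1 - cinv w 0 = 2 / (w.1 + 1) := by
  rw [cinv_zero]
  field_simp
  ring

lemma cayley_cinv (w : ℂ × EuclideanSpace ℂ (Fin n)) (h : w.1 + 1 ≠ 0) :
    cayley (cinv w) = w := by
  have key := one_sub_cinv w h
  refine Prod.ext ?_ (PiLp.ext fun j => ?_)
  · show (1 + cinv w 0) / (1 - cinv w 0) = w.1
    rw [key, cinv_zero]
    field_simp
    ring
  · show cinv w j.succ / (1 - cinv w 0) = w.2 j
    rw [cinv_succ, key]
    field_simp

lemma norm_apply_le {m : ℕ} (x : EuclideanSpace ℂ (Fin m)) (i : Fin m) : ‖x i‖ ≤ ‖x‖ := by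
  have h1 : ‖x i‖^2 ≤ ‖x‖^2 := by
    rw [nsq]
    exact Finset.single_le_sum (f := fun j => ‖x j‖^2) (fun j _ => sq_nonneg _) (Finset.mem_univ i)
  nlinarith [norm_nonneg x, norm_nonneg (x i)]

lemma one_sub_ne (z : EuclideanSpace ℂ (Fin (n+1))) (h : ‖z‖ < 1) : 1 - z 0 ≠ 0 := by
  intro h0
  have h1 : (1 : ℂ) = z 0 := sub_eq_zero.mp h0
  have h2 := norm_apply_le z 0
  rw [← h1, norm_one] at h2
  linarith

lemma siegel_ne (w : ℂ × EuclideanSpace ℂ (Fin n)) (hw : w ∈ Siegel n) : w.1 + 1 ≠ 0 := by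
  intro h0
  have h1 : (0:ℝ) ≤ ‖w.2‖^2 := sq_nonneg _
  have h2 : ‖w.2‖^2 < w.1.re := hw
  have h3 := congrArg Complex.re h0
  simp [Complex.add_re] at h3
  linarith

lemma cayley_bijOn : Set.BijOn (cayley (n := n)) (Metric.ball 0 1) (Siegel n) := by
  have hmt : Set.MapsTo (cayley (n := n)) (Metric.ball 0 1) (Siegel n) := fun z hz => by
    rw [mem_ball_zero_iff] at hz
    exact (cayley_mem_iff z (one_sub_ne z hz)).mpr hz
  have hmt2 : Set.MapsTo cinv (Siegel n) (Metric.ball 0 1) := by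
    intro w hw
    rw [mem_ball_zero_iff]
    have h1 : 1 - cinv w 0 ≠ 0 := by
      rw [one_sub_cinv w (siegel_ne w hw)]
      exact div_ne_zero two_ne_zero (siegel_ne w hw)
    refine (cayley_mem_iff (cinv w) h1).mp ?_
    rw [cayley_cinv w (siegel_ne w hw)]
    exact hw
  exact Set.InvOn.bijOn
    ⟨fun z hz => cinv_cayley z (one_sub_ne z (mem_ball_zero_iff.mp hz)),
     fun w hw => cayley_cinv w (siegel_ne w hw)⟩ hmt hmt2

lemma T_bijOn (b : EuclideanSpace ℂ (Fin n)) (t : ℝ)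
    (T : ℂ × EuclideanSpace ℂ (Fin n) → ℂ × EuclideanSpace ℂ (Fin n))
    (hT : ∀ w, T w = (w.1 - 2 * (inner ℂ b w.2 : ℂ) + (‖b‖^2 : ℂ)
      - Complex.I * ((t : ℝ) : ℂ), w.2 - b)) :
    Set.BijOn T (Siegel n) (Siegel n) := by
  set S : ℂ × EuclideanSpace ℂ (Fin n) → ℂ × EuclideanSpace ℂ (Fin n) :=
    fun u => (u.1 + 2 * (inner ℂ b u.2 : ℂ) + (‖b‖^2 : ℂ) + Complex.I * ((t : ℝ) : ℂ), u.2 + b)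
    with hS
  have hbb : (inner ℂ b b : ℂ) = ((‖b‖ : ℂ))^2 := inner_self_eq_norm_sq_to_K b
  have hST : ∀ w, S (T w) = w := by
    intro w
    rw [hT, hS]
    refine Prod.ext ?_ ?_
    · show (w.1 - 2 * (inner ℂ b w.2 : ℂ) + (‖b‖^2 : ℂ) - Complex.I * ((t : ℝ) : ℂ))
        + 2 * (inner ℂ b (w.2 - b) : ℂ) + (‖b‖^2 : ℂ) + Complex.I * ((t : ℝ) : ℂ) = w.1
      rw [inner_sub_right, hbb]; ring
    · show w.2 - b + b = w.2
      abel
  have hTS : ∀ w, T (S w) = w := by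
    intro w
    rw [hT, hS]
    refine Prod.ext ?_ ?_
    · show (w.1 + 2 * (inner ℂ b w.2 : ℂ) + (‖b‖^2 : ℂ) + Complex.I * ((t : ℝ) : ℂ))
        - 2 * (inner ℂ b (w.2 + b) : ℂ) + (‖b‖^2 : ℂ) - Complex.I * ((t : ℝ) : ℂ) = w.1
      rw [inner_add_right, hbb]; ring
    · show w.2 + b - b = w.2
      abel
  have hresub : ∀ (x : EuclideanSpace ℂ (Fin n)),
      (inner ℂ x b : ℂ).re = (inner ℂ b x : ℂ).re := by
    intro x
    rw [← inner_conj_symm x b, Complex.conj_re]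
  have hnsub : ∀ (x : EuclideanSpace ℂ (Fin n)),
      ‖x - b‖^2 = ‖x‖^2 - 2*(inner ℂ b x : ℂ).re + ‖b‖^2 := by
    intro x
    have h1 := norm_sub_sq (𝕜 := ℂ) x b
    rw [RCLike.re_to_complex, hresub x] at h1
    exact h1
  have hnadd : ∀ (x : EuclideanSpace ℂ (Fin n)),
      ‖x + b‖^2 = ‖x‖^2 + 2*(inner ℂ b x : ℂ).re + ‖b‖^2 := by
    intro x
    have h1 := norm_add_sq (𝕜 := ℂ) x b
    rw [RCLike.re_to_complex, hresub x] at h1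
    exact h1
  have hmt1 : Set.MapsTo T (Siegel n) (Siegel n) := by
    intro w hw
    have h2 : ‖w.2‖^2 < w.1.re := hw
    show ‖(T w).2‖^2 < (T w).1.re
    rw [hT]
    show ‖w.2 - b‖^2 < (w.1 - 2 * (inner ℂ b w.2 : ℂ) + (‖b‖^2 : ℂ)
      - Complex.I * ((t : ℝ) : ℂ)).re
    rw [hnsub]
    simp only [Complex.sub_re, Complex.add_re, Complex.mul_re, Complex.I_re, Complex.I_im,
      ← Complex.ofReal_pow, Complex.ofReal_re, Complex.ofReal_im, Complex.re_ofNat,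
      Complex.im_ofNat]
    nlinarith [h2]
  have hmt2 : Set.MapsTo S (Siegel n) (Siegel n) := by
    intro w hw
    have h2 : ‖w.2‖^2 < w.1.re := hw
    show ‖(S w).2‖^2 < (S w).1.re
    rw [hS]
    show ‖w.2 + b‖^2 < (w.1 + 2 * (inner ℂ b w.2 : ℂ) + (‖b‖^2 : ℂ)
      + Complex.I * ((t : ℝ) : ℂ)).re
    rw [hnadd]
    simp only [Complex.sub_re, Complex.add_re, Complex.mul_re, Complex.I_re, Complex.I_im,
      ← Complex.ofReal_pow, Complex.ofReal_re, Complex.ofReal_im, Complex.re_ofNat,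
      Complex.im_ofNat]
    nlinarith [h2]
  exact Set.InvOn.bijOn ⟨fun w _ => hST w, fun w _ => hTS w⟩ hmt1 hmt2

end ParAux

/-- **Claim (normalizing parabolic automorphism of the Siegel domain).**
Let `z₀ ∈ B^N`, `R(z₀) = |1−⟨z₀,e₁⟩|²/(1−‖z₀‖²)`, `w₀ = C(z₀)` and
`T̃(w₁,w'') = (w₁ − 2⟨w'',w₀''⟩ + ‖w₀''‖² − i·Im((w₀)₁), w'' − w₀'')`. Then the Cayley
transform maps `B^N` bijectively onto `ℍ^N`, `T̃` maps `ℍ^N` bijectively onto itself, and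
`(C⁻¹ ∘ T̃ ∘ C)(z₀) = ((1−R(z₀))/(1+R(z₀)))·e₁`. -/
theorem parabolic_normalization {n : ℕ} (z₀ : EuclideanSpace ℂ (Fin (n+1)))
    (hz₀ : z₀ ∈ Metric.ball (0 : EuclideanSpace ℂ (Fin (n+1))) 1)
    (R : ℝ) (hR : R = ‖1 - z₀ 0‖ ^ 2 / (1 - ‖z₀‖^2))
    (T : ℂ × EuclideanSpace ℂ (Fin n) → ℂ × EuclideanSpace ℂ (Fin n))
    (hT : ∀ w : ℂ × EuclideanSpace ℂ (Fin n),
      T w = (w.1 - 2 * (inner ℂ (cayley z₀).2 w.2 : ℂ) + (‖(cayley z₀).2‖^2 : ℂ)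
          - Complex.I * (((cayley z₀).1.im : ℝ) : ℂ), w.2 - (cayley z₀).2)) :
    Set.BijOn (cayley (n := n)) (Metric.ball 0 1) (Siegel n) ∧
    Set.BijOn T (Siegel n) (Siegel n) ∧
    T (cayley z₀) = cayley ((((1 - R) / (1 + R) : ℝ) : ℂ) • e1 n) := by
  have hz : ‖z₀‖ < 1 := mem_ball_zero_iff.mp hz₀
  have hd : 1 - z₀ 0 ≠ 0 := ParAux.one_sub_ne z₀ hz
  have hN : 0 < Complex.normSq (1 - z₀ 0) := by simpa [Complex.normSq_pos] using hd
  have hK : 0 < 1 - ‖z₀‖^2 := by nlinarith [norm_nonneg z₀]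
  have hR' : R = Complex.normSq (1 - z₀ 0) / (1 - ‖z₀‖^2) := by
    rw [hR, Complex.sq_norm]
  have hRpos : 0 < R := by rw [hR']; positivity
  refine ⟨ParAux.cayley_bijOn, ParAux.T_bijOn _ _ T hT, ?_⟩
  set s : ℝ := (1 - R) / (1 + R) with hs
  set b := (cayley z₀).2 with hb
  have hbb : (inner ℂ b b : ℂ) = ((‖b‖ : ℂ))^2 := inner_self_eq_norm_sq_to_K b
  -- values of s • e1
  have hx0 : ((s : ℂ) • e1 n) 0 = (s : ℂ) := by
    simp [e1, EuclideanSpace.single_apply]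
  have hxs : ∀ j : Fin n, ((s : ℂ) • e1 n) j.succ = 0 := by
    intro j
    simp [e1, EuclideanSpace.single_apply, Fin.succ_ne_zero j]
  -- second components agree
  have hsnd : (T (cayley z₀)).2 = (cayley ((s : ℂ) • e1 n)).2 := by
    rw [hT]
    show b - b = WithLp.toLp 2 (fun j : Fin n => ((s : ℂ) • e1 n) j.succ / (1 - ((s : ℂ) • e1 n) 0))
    rw [sub_self]
    ext j
    show (0 : EuclideanSpace ℂ (Fin n)) j = ((s : ℂ) • e1 n) j.succ / (1 - ((s : ℂ) • e1 n) 0)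
    rw [hxs j, zero_div]
    rfl
  -- first component of the left side
  have hLfst : (T (cayley z₀)).1
      = (((cayley z₀).1.re - ‖b‖^2 : ℝ) : ℂ) := by
    rw [hT]
    show (cayley z₀).1 - 2 * (inner ℂ b b : ℂ) + ((‖b‖ : ℂ))^2
        - Complex.I * (((cayley z₀).1.im : ℝ) : ℂ) = _
    rw [hbb]
    push_cast
    linear_combination -Complex.re_add_im ((cayley z₀).1)
  have hval : (cayley z₀).1.re - ‖b‖^2
      = (1 - ‖z₀‖^2) / Complex.normSq (1 - z₀ 0) := by
    rw [show (cayley z₀).1 = (1 + z₀ 0) / (1 - z₀ 0) from rfl, ParAux.re_formula _ hd,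
      hb, ParAux.snd_norm_sq z₀, ParAux.norm_sq_decomp z₀]
    ring
  -- first component of the right side
  have hreal : (1 + s) / (1 - s) = (1 - ‖z₀‖^2) / Complex.normSq (1 - z₀ 0) := by
    have h1R : (0:ℝ) < 1 + R := by linarith
    have e1' : 1 + s = 2 / (1 + R) := by
      rw [hs]; field_simp; ring
    have e2' : 1 - s = 2 * R / (1 + R) := by
      rw [hs]; field_simp; ring
    rw [e1', e2', hR']
    field_simp
  have hRfst : (cayley ((s : ℂ) • e1 n)).1
      = (((1 - ‖z₀‖^2) / Complex.normSq (1 - z₀ 0) : ℝ) : ℂ) := by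
    show (1 + ((s : ℂ) • e1 n) 0) / (1 - ((s : ℂ) • e1 n) 0) = _
    rw [hx0, ← hreal]
    push_cast
    ring
  refine Prod.ext ?_ hsnd
  rw [hLfst, hRfst, hval]
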